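/- For the Gumbel-max trick: if z_i = θ_i - log(-log v_i) with v_i i.i.d. uniform on [0,1], i = 1,...,k, then P(argmax_i z_i = j) = exp(θ_j) / ∑_{i=1}^k exp(θ_i). -/

import Mathlib

open MeasureTheory Set

lemma gumbel_pointwise (θi θj : ℝ) (a b : ℝ) (ha : a ∈ Ioo (0:ℝ) 1) (hb : b ∈ Ioo (0:ℝ) 1) :
    (θi - Real.log (-Real.log a) < θj - Real.log (-Real.log b)) ↔
      a < b ^ Real.exp (θi - θj) := by
  obtain ⟨ha0, ha1⟩ := ha
  obtain ⟨hb0, hb1⟩ := hb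
  have hla : 0 < -Real.log a := by simpa using Real.log_neg ha0 ha1
  have hlb : 0 < -Real.log b := by simpa using Real.log_neg hb0 hb1
  calc θi - Real.log (-Real.log a) < θj - Real.log (-Real.log b)
      ↔ θi - θj < Real.log (-Real.log a) - Real.log (-Real.log b) := by
        constructor <;> intro <;> linarith
    _ ↔ θi - θj < Real.log ((-Real.log a) / (-Real.log b)) := by
        rw [Real.log_div hla.ne' hlb.ne']
    _ ↔ Real.exp (θi - θj) < (-Real.log a) / (-Real.log b) :=
        Real.lt_log_iff_exp_lt (div_pos hla hlb)
    _ ↔ Real.exp (θi - θj) * (-Real.log b) < -Real.log a := lt_div_iff₀ hlb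
    _ ↔ Real.log a < Real.exp (θi - θj) * Real.log b := by
        rw [mul_neg, neg_lt_neg_iff]
    _ ↔ Real.log a < Real.log (b ^ Real.exp (θi - θj)) := by
        rw [Real.log_rpow hb0]
    _ ↔ a < b ^ Real.exp (θi - θj) :=
        Real.log_lt_log_iff ha0 (Real.rpow_pos_of_pos hb0 _)

lemma gumbel_1d (S : ℝ) (hS : 0 ≤ S) :
    ∫⁻ t in Ioo (0:ℝ) 1, ENNReal.ofReal (t ^ S) = ENNReal.ofReal (1 / (S + 1)) := by
  have hii : IntervalIntegrable (fun t : ℝ => t ^ S) volume 0 1 :=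
    intervalIntegral.intervalIntegrable_rpow (Or.inl (by linarith))
  have hint : IntegrableOn (fun t : ℝ => t ^ S) (Ioo (0:ℝ) 1) :=
    ((intervalIntegrable_iff_integrableOn_Ioc_of_le zero_le_one).mp hii).mono_set
      Ioo_subset_Ioc_self
  rw [← ofReal_integral_eq_lintegral_ofReal hint]
  · congr 1
    rw [← integral_Ioc_eq_integral_Ioo, ← intervalIntegral.integral_of_le zero_le_one,
      integral_rpow (Or.inl (by linarith))]
    rw [Real.one_rpow, Real.zero_rpow (by linarith)]
    ring
  · filter_upwards [self_mem_ae_restrict measurableSet_Ioo] with t ht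
    exact Real.rpow_nonneg ht.1.le _

/-- Gumbel-max trick: for `z_i = θ_i - log (-log v_i)` with `v_i` i.i.d. uniform on `[0,1]`,
the probability that `z_j` is the (a.s. unique) maximum is `exp θ_j / ∑_i exp θ_i`. -/
theorem gumbel_max_trick (k : ℕ) (θ : Fin k → ℝ) (j : Fin k) :
    Measure.pi (fun _ : Fin k => volume.restrict (Set.Icc (0:ℝ) 1))
        {v : Fin k → ℝ | ∀ i : Fin k, i ≠ j →
          θ i - Real.log (-Real.log (v i)) < θ j - Real.log (-Real.log (v j))}
      = ENNReal.ofReal (Real.exp (θ j) / ∑ i : Fin k, Real.exp (θ i)) := by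
  have hk : 0 < k := j.pos
  obtain ⟨n, rfl⟩ : ∃ n, k = n + 1 := ⟨k - 1, by omega⟩
  set μ : Measure ℝ := volume.restrict (Ioo (0:ℝ) 1) with hμdef
  have hrestr : (fun _ : Fin (n+1) => volume.restrict (Icc (0:ℝ) 1))
      = fun _ : Fin (n+1) => μ :=
    funext fun _ => (Measure.restrict_congr_set Ioo_ae_eq_Icc).symm
  rw [hrestr]
  have hμIoo : μ (Ioo (0:ℝ) 1) = 1 := by
    rw [hμdef, Measure.restrict_apply measurableSet_Ioo, inter_self, Real.volume_Ioo]
    norm_num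
  have hμuniv : μ univ = 1 := by
    rw [hμdef, Measure.restrict_apply_univ, Real.volume_Ioo]; norm_num
  set c : Fin (n+1) → ℝ := fun i => Real.exp (θ i - θ j) with hc
  set S : Set (Fin (n+1) → ℝ) := {v : Fin (n+1) → ℝ | ∀ i : Fin (n+1), i ≠ j →
          θ i - Real.log (-Real.log (v i)) < θ j - Real.log (-Real.log (v j))} with hS
  set T : Set (Fin (n+1) → ℝ) := {v : Fin (n+1) → ℝ | ∀ m : Fin n,
          v (j.succAbove m) < (v j) ^ c (j.succAbove m)} with hT
  set G : Set (Fin (n+1) → ℝ) := Set.pi univ (fun _ : Fin (n+1) => Ioo (0:ℝ) 1) with hG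
  have hGmeas : MeasurableSet G := MeasurableSet.univ_pi fun _ => measurableSet_Ioo
  have hpi_univ : Measure.pi (fun _ : Fin (n+1) => μ) univ = 1 := by
    rw [Measure.pi_univ]; simp [hμuniv]
  have hpi_G : Measure.pi (fun _ : Fin (n+1) => μ) G = 1 := by
    rw [hG, Measure.pi_pi]; simp [hμIoo]
  have hGc : Measure.pi (fun _ : Fin (n+1) => μ) Gᶜ = 0 := by
    rw [measure_compl hGmeas (by rw [hpi_G]; exact ENNReal.one_ne_top), hpi_univ, hpi_G,
      tsub_self]
  -- on G, the sets S and T coincide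
  have hST : ∀ v ∈ G, (v ∈ S ↔ v ∈ T) := by
    intro v hv
    have hvi : ∀ i, v i ∈ Ioo (0:ℝ) 1 := fun i => hv i (mem_univ i)
    constructor
    · intro hvS m
      exact (gumbel_pointwise (θ (j.succAbove m)) (θ j) (v (j.succAbove m)) (v j)
        (hvi _) (hvi _)).mp (hvS _ (Fin.succAbove_ne j m))
    · intro hvT i hi
      obtain ⟨m, rfl⟩ := Fin.exists_succAbove_eq hi
      exact (gumbel_pointwise (θ (j.succAbove m)) (θ j) (v (j.succAbove m)) (v j)
        (hvi _) (hvi _)).mpr (hvT m)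
  -- hence same measure
  have hmeasST : Measure.pi (fun _ : Fin (n+1) => μ) S
      = Measure.pi (fun _ : Fin (n+1) => μ) T := by
    apply measure_congr
    rw [MeasureTheory.ae_eq_set]
    constructor
    · refine measure_mono_null (fun v hv => ?_) hGc
      intro hvG
      exact hv.2 ((hST v hvG).mp hv.1)
    · refine measure_mono_null (fun v hv => ?_) hGc
      intro hvG
      exact hv.2 ((hST v hvG).mpr hv.1)
  rw [hmeasST]
  -- split off the j-th coordinate
  set e := MeasurableEquiv.piFinSuccAbove (fun _ : Fin (n+1) => ℝ) j with he
  have hpres := measurePreserving_piFinSuccAbove (fun _ : Fin (n+1) => μ) j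
  set B : Set (ℝ × (Fin n → ℝ)) :=
    {p : ℝ × (Fin n → ℝ) | ∀ m : Fin n, p.2 m < p.1 ^ c (j.succAbove m)} with hB
  have hBmeas : MeasurableSet B := by
    have : B = ⋂ m : Fin n, {p : ℝ × (Fin n → ℝ) | p.2 m < p.1 ^ c (j.succAbove m)} := by
      ext p; simp [hB, Set.mem_iInter]
    rw [this]
    exact MeasurableSet.iInter fun m => measurableSet_lt
      (measurable_snd.eval) (measurable_fst.pow measurable_const)
  have hTB : T = e ⁻¹' B := by
    ext v
    simp [hT, hB, he, MeasurableEquiv.piFinSuccAbove, Fin.removeNth, Fin.insertNthEquiv]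
  rw [hTB, hpres.measure_preimage hBmeas.nullMeasurableSet]
  -- compute the product measure by Fubini
  rw [Measure.prod_apply hBmeas]
  set Sr : ℝ := ∑ m : Fin n, c (j.succAbove m) with hSr
  have hSr0 : 0 ≤ Sr := Finset.sum_nonneg fun m _ => (Real.exp_pos _).le
  have hslice : ∀ t ∈ Ioo (0:ℝ) 1,
      Measure.pi (fun _ : Fin n => μ) (Prod.mk t ⁻¹' B) = ENNReal.ofReal (t ^ Sr) := by
    intro t ht
    have hPre : Prod.mk t ⁻¹' B = Set.pi univ (fun m : Fin n => Iio (t ^ c (j.succAbove m))) := by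
      ext w
      simp only [mem_preimage, hB, mem_setOf_eq, mem_univ_pi, mem_Iio]
    rw [hPre, Measure.pi_pi]
    have hfac : ∀ m : Fin n, μ (Iio (t ^ c (j.succAbove m)))
        = ENNReal.ofReal (t ^ c (j.succAbove m)) := by
      intro m
      have h0 : 0 < t ^ c (j.succAbove m) := Real.rpow_pos_of_pos ht.1 _
      have h1 : t ^ c (j.succAbove m) < 1 :=
        Real.rpow_lt_one ht.1.le ht.2 (Real.exp_pos _)
      have : Iio (t ^ c (j.succAbove m)) ∩ Ioo (0:ℝ) 1 = Ioo 0 (t ^ c (j.succAbove m)) := by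
        ext x
        simp only [mem_inter_iff, mem_Iio, mem_Ioo]
        constructor
        · rintro ⟨hx, hx0, _⟩; exact ⟨hx0, hx⟩
        · rintro ⟨hx0, hx⟩; exact ⟨hx, hx0, hx.trans h1⟩
      rw [hμdef, Measure.restrict_apply measurableSet_Iio, this, Real.volume_Ioo, sub_zero]
    simp_rw [hfac]
    rw [← ENNReal.ofReal_prod_of_nonneg (fun m _ => (Real.rpow_nonneg ht.1.le _))]
    congr 1
    rw [hSr]
    simp_rw [Real.rpow_def_of_pos ht.1, ← Real.exp_sum, Finset.mul_sum]
  calc (∫⁻ t, Measure.pi (fun _ : Fin n => μ) (Prod.mk t ⁻¹' B) ∂μ)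
      = ∫⁻ t in Ioo (0:ℝ) 1, ENNReal.ofReal (t ^ Sr) := by
        rw [hμdef]
        exact setLIntegral_congr_fun measurableSet_Ioo
          hslice
    _ = ENNReal.ofReal (1 / (Sr + 1)) := gumbel_1d Sr hSr0
    _ = ENNReal.ofReal (Real.exp (θ j) / ∑ i : Fin (n+1), Real.exp (θ i)) := by
        congr 1
        have hsum : ∑ i : Fin (n+1), Real.exp (θ i)
            = Real.exp (θ j) + ∑ m : Fin n, Real.exp (θ (j.succAbove m)) :=
          Fin.sum_univ_succAbove (fun i => Real.exp (θ i)) j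
        have hSr' : Sr = (∑ m : Fin n, Real.exp (θ (j.succAbove m))) / Real.exp (θ j) := by
          rw [hSr, Finset.sum_div]
          exact Finset.sum_congr rfl fun m _ => Real.exp_sub _ _
        rw [hSr', hsum]
        have hej : (0:ℝ) < Real.exp (θ j) := Real.exp_pos _
        have hpos : (0:ℝ) < Real.exp (θ j) + ∑ m : Fin n, Real.exp (θ (j.succAbove m)) := by
          have : 0 ≤ ∑ m : Fin n, Real.exp (θ (j.succAbove m)) :=
            Finset.sum_nonneg fun m _ => (Real.exp_pos _).le
          linarith
        field_simp
        ring
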